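/- Critical distortion D_max for the nonanticipative RDF (Lemma 5, finite-alphabet form): let 𝒳_0,…,𝒳_n and 𝒴_0,…,𝒴_n be nonempty finite sets, P a probability measure on ∏𝒳_i, and d : (∏𝒳_i) × (∏𝒴_i) → [0,∞) a function. Define R^{na}_{0,n}(D) as the infimum (in [0,∞]) of the Kullback–Leibler divergence of μ from the product of its two marginals, over all joint probability measures μ on (∏𝒳_i) × (∏𝒴_i) whose ∏𝒳_i-marginal equals P, which satisfy ∫ d dμ ≤ (n+1)D, and for which, for every i = 0,…,n−1, (X_{i+1},…,X_n) is conditionally independent of (Y_0,…,Y_i) given (X_0,…,X_i) under μ. Set D_max := min over y ∈ ∏𝒴_i of (1/(n+1)) ∫ d(x, y) dP(x). Then R^{na}_{0,n}(D) = 0 for every D ≥ D_max, and R^{na}_{0,n}(D) > 0 for every D with 0 ≤ D < D_max. -/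

import Mathlib

open MeasureTheory ProbabilityTheory
open scoped NNReal ENNReal Classical


/-- Kullback–Leibler divergence of `μ` from `ν`: `∫ log(dμ/dν) dμ` when `μ ≪ ν` and the
log-likelihood ratio is `μ`-integrable, and `∞` otherwise. -/
noncomputable def klDivergence {α : Type*} [MeasurableSpace α] (μ ν : Measure α) : ℝ≥0∞ :=
  if μ ≪ ν ∧ Integrable (llr μ ν) μ then ENNReal.ofReal (∫ x, llr μ ν x ∂μ) else ∞

/-- Mutual information `I(X^n; Y^n)` of a joint measure on a product space: the KL divergence
of the joint measure from the product of its two marginals. -/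
noncomputable def mutualInfoProd {α β : Type*} [MeasurableSpace α] [MeasurableSpace β]
    (μ : Measure (α × β)) : ℝ≥0∞ :=
  klDivergence μ ((μ.map Prod.fst).prod (μ.map Prod.snd))


lemma aux_log_ineq {p q : ℝ} (hp : 0 ≤ p) (hq : 0 ≤ q) (h : q = 0 → p = 0) :
    2*p - 2*Real.sqrt (p*q) ≤ p * Real.log (p/q) := by
  rcases eq_or_lt_of_le hp with h0 | hp'
  · simp [← h0]
  rcases eq_or_lt_of_le hq with h0 | hq'
  · exact absurd (h h0.symm) (ne_of_gt hp')
  have hs : Real.log (q/p) ≤ 2*(Real.sqrt (q/p) - 1) := by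
    have h1 := Real.log_le_sub_one_of_pos (Real.sqrt_pos.mpr (div_pos hq' hp'))
    have h2 : Real.log (Real.sqrt (q/p)) = Real.log (q/p) / 2 :=
      Real.log_sqrt (le_of_lt (div_pos hq' hp'))
    linarith
  have hflip : Real.log (p/q) = - Real.log (q/p) := by
    rw [Real.log_div (ne_of_gt hp') (ne_of_gt hq'), Real.log_div (ne_of_gt hq') (ne_of_gt hp')]
    ring
  have hkey : p * Real.sqrt (q/p) = Real.sqrt (p*q) := by
    rw [show p * Real.sqrt (q/p) = Real.sqrt (p^2) * Real.sqrt (q/p) by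
      rw [Real.sqrt_sq hp], ← Real.sqrt_mul (sq_nonneg p)]
    congr 1
    field_simp
  have : p * Real.log (p/q) = p * (- Real.log (q/p)) := by rw [hflip]
  rw [this]
  have h3 : p * Real.log (q/p) ≤ p * (2*(Real.sqrt (q/p) - 1)) :=
    mul_le_mul_of_nonneg_left hs hp
  nlinarith [hkey]

lemma aux_pinsker {α : Type*} [Fintype α] (p q : α → ℝ) (hp : ∀ z, 0 ≤ p z) (hq : ∀ z, 0 ≤ q z)
    (hpq : ∀ z, q z = 0 → p z = 0) (hp1 : ∑ z, p z = 1) (hq1 : ∑ z, q z = 1) :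
    (∑ z, |p z - q z|)^2 / 4 ≤ ∑ z, p z * Real.log (p z / q z) := by
  classical
  set s : ℝ := ∑ z, Real.sqrt (p z * q z) with hs
  have hsqp : ∀ z, Real.sqrt (p z) ^ 2 = p z := fun z => Real.sq_sqrt (hp z)
  have hsqq : ∀ z, Real.sqrt (q z) ^ 2 = q z := fun z => Real.sq_sqrt (hq z)
  have e1 : ∑ z, (Real.sqrt (p z) - Real.sqrt (q z))^2 = 2 - 2*s := by
    have : ∀ z ∈ Finset.univ, (Real.sqrt (p z) - Real.sqrt (q z))^2
        = p z + q z - 2 * Real.sqrt (p z * q z) := by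
      intro z _
      rw [sub_sq, hsqp, hsqq, Real.sqrt_mul (hp z)]
      ring
    rw [Finset.sum_congr rfl this]
    rw [Finset.sum_sub_distrib, Finset.sum_add_distrib, hp1, hq1, ← Finset.mul_sum]
    ring
  have hsle : s ≤ 1 := by
    have : ∀ z ∈ Finset.univ, Real.sqrt (p z * q z) ≤ (p z + q z)/2 := by
      intro z _
      nlinarith [sq_nonneg (Real.sqrt (p z) - Real.sqrt (q z)), hsqp z, hsqq z,
        Real.sqrt_mul (hp z) (q z), Real.sqrt_nonneg (p z * q z)]
    calc s ≤ ∑ z, (p z + q z)/2 := Finset.sum_le_sum this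
    _ = 1 := by rw [← Finset.sum_div, Finset.sum_add_distrib, hp1, hq1]; norm_num
  have key1 : 2 - 2*s ≤ ∑ z, p z * Real.log (p z / q z) := by
    have : ∀ z ∈ Finset.univ, 2 * p z - 2 * Real.sqrt (p z * q z) ≤ p z * Real.log (p z / q z) :=
      fun z _ => aux_log_ineq (hp z) (hq z) (hpq z)
    calc 2 - 2*s = ∑ z, (2 * p z - 2 * Real.sqrt (p z * q z)) := by
          rw [Finset.sum_sub_distrib, ← Finset.mul_sum, ← Finset.mul_sum, hp1]; ring
    _ ≤ _ := Finset.sum_le_sum this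
  have key2 : (∑ z, |p z - q z|)^2 ≤ (2 - 2*s) * 4 := by
    have habs : ∀ z ∈ Finset.univ, |p z - q z|
        = |Real.sqrt (p z) - Real.sqrt (q z)| * (Real.sqrt (p z) + Real.sqrt (q z)) := by
      intro z _
      rw [show p z - q z = (Real.sqrt (p z) - Real.sqrt (q z)) * (Real.sqrt (p z) + Real.sqrt (q z)) by
        nlinarith [hsqp z, hsqq z]]
      rw [abs_mul, abs_of_nonneg (show (0:ℝ) ≤ Real.sqrt (p z) + Real.sqrt (q z) by positivity)]
    rw [Finset.sum_congr rfl habs]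
    have hcs := Finset.sum_mul_sq_le_sq_mul_sq Finset.univ
      (fun z => |Real.sqrt (p z) - Real.sqrt (q z)|) (fun z => Real.sqrt (p z) + Real.sqrt (q z))
    have e2 : ∑ z, |Real.sqrt (p z) - Real.sqrt (q z)|^2 = 2 - 2*s := by
      rw [← e1]; exact Finset.sum_congr rfl fun z _ => sq_abs _
    have e3 : ∑ z, (Real.sqrt (p z) + Real.sqrt (q z))^2 = 2 + 2*s := by
      have : ∀ z ∈ Finset.univ, (Real.sqrt (p z) + Real.sqrt (q z))^2
          = p z + q z + 2 * Real.sqrt (p z * q z) := by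
        intro z _
        rw [add_sq, hsqp, hsqq, Real.sqrt_mul (hp z)]
        ring
      rw [Finset.sum_congr rfl this, Finset.sum_add_distrib, Finset.sum_add_distrib, hp1, hq1,
        ← Finset.mul_sum]
      ring
    rw [e2, e3] at hcs
    have h2s : 0 ≤ 2 - 2*s := by rw [← e1]; positivity
    nlinarith
  linarith



lemma aux_sum_singleton {α : Type*} [MeasurableSpace α] [MeasurableSingletonClass α]
    (μ : Measure α) (t : Finset α) : ∑ z ∈ t, μ {z} = μ ↑t := by
  classical
  have h := measure_biUnion_finset (μ := μ) (s := t) (f := fun z => ({z} : Set α))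
    (fun a _ b _ hab => by simp [Set.disjoint_singleton, hab])
    (fun b _ => measurableSet_singleton b)
  rw [show (⋃ b ∈ t, ({b} : Set α)) = ↑t by ext x; simp] at h
  exact h.symm

lemma aux_measure_ext {α : Type*} [Fintype α] [MeasurableSpace α] [MeasurableSingletonClass α]
    {μ ν : Measure α} (h : ∀ z, μ {z} = ν {z}) : μ = ν := by
  ext s hs
  classical
  rw [← Set.Finite.coe_toFinset s.toFinite, ← aux_sum_singleton μ, ← aux_sum_singleton ν]
  exact Finset.sum_congr rfl fun z _ => h z

lemma aux_rnDeriv {α : Type*} [Fintype α] [MeasurableSpace α] [DiscreteMeasurableSpace α]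
    (μ ν : Measure α) [IsFiniteMeasure μ] [IsFiniteMeasure ν] (hac : μ ≪ ν) :
    μ.rnDeriv ν =ᵐ[ν] fun z => μ {z} / ν {z} := by
  have hwd : ν.withDensity (fun z => μ {z} / ν {z}) = μ := by
    apply aux_measure_ext
    intro z
    rw [withDensity_apply _ (measurableSet_singleton z), lintegral_singleton]
    rcases eq_or_ne (ν {z}) 0 with h0 | h0
    · rw [h0, mul_zero, hac (by exact h0)]
    · exact ENNReal.div_mul_cancel h0 (measure_ne_top ν _)
  have := Measure.rnDeriv_withDensity ν (f := fun z => μ {z} / ν {z}) .of_discrete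
  rw [hwd] at this
  exact this

lemma aux_klDivergence_self {α : Type*} [MeasurableSpace α] (μ : Measure α) [SigmaFinite μ] :
    klDivergence μ μ = 0 := by
  have h0 : llr μ μ =ᵐ[μ] fun _ => (0 : ℝ) := by
    filter_upwards [Measure.rnDeriv_self μ] with x hx
    simp [llr, hx]
  rw [klDivergence, if_pos ⟨Measure.AbsolutelyContinuous.rfl,
    (integrable_congr h0).mpr (integrable_zero _ _ _)⟩, integral_congr_ae h0]
  simp

lemma aux_toReal_eq_zero {α : Type*} [MeasurableSpace α] (ν : Measure α) [IsFiniteMeasure ν]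
    {s : Set α} (h : (ν s).toReal = 0) : ν s = 0 := by
  rcases ENNReal.toReal_eq_zero_iff _ |>.mp h with h' | h'
  · exact h'
  · exact absurd h' (measure_ne_top ν s)

lemma aux_sum_toReal_one {α : Type*} [Fintype α] [MeasurableSpace α] [MeasurableSingletonClass α]
    (μ : Measure α) [IsProbabilityMeasure μ] : ∑ z, (μ {z}).toReal = 1 := by
  classical
  have h := aux_sum_singleton μ Finset.univ
  rw [Finset.coe_univ, measure_univ] at h
  have := congrArg ENNReal.toReal h
  rwa [ENNReal.toReal_sum (fun a _ => measure_ne_top μ _), ENNReal.toReal_one] at this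

lemma aux_kl_ge {α : Type*} [Fintype α] [MeasurableSpace α] [DiscreteMeasurableSpace α]
    (μ ν : Measure α) [IsProbabilityMeasure μ] [IsProbabilityMeasure ν] :
    ENNReal.ofReal ((∑ z, |(μ {z}).toReal - (ν {z}).toReal|)^2 / 4) ≤ klDivergence μ ν := by
  classical
  rw [klDivergence]
  split_ifs with hc
  · obtain ⟨hac, hint⟩ := hc
    have hae : llr μ ν =ᵐ[μ] fun z => Real.log ((μ {z}).toReal / (ν {z}).toReal) := by
      have h1 := aux_rnDeriv μ ν hac
      filter_upwards [h1.filter_mono hac.ae_le] with z hz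
      rw [llr_def]
      simp only [hz, ENNReal.toReal_div]
    rw [integral_congr_ae hae, integral_fintype (Integrable.of_finite)]
    apply ENNReal.ofReal_le_ofReal
    have := aux_pinsker (fun z => (μ {z}).toReal) (fun z => (ν {z}).toReal)
      (fun z => ENNReal.toReal_nonneg) (fun z => ENNReal.toReal_nonneg)
      (fun z hz => by
        show (μ {z}).toReal = 0
        rw [hac (aux_toReal_eq_zero ν (show (ν {z}).toReal = 0 from hz))]; simp)
      (aux_sum_toReal_one μ) (aux_sum_toReal_one ν)
    simpa [smul_eq_mul, measureReal_def] using this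
  · exact le_top


lemma aux_condIndepFun_of_ae_const {Ω β γ : Type*} {m' : MeasurableSpace Ω}
    {mΩ : MeasurableSpace Ω} [StandardBorelSpace Ω] (hm' : m' ≤ mΩ) [mβ : MeasurableSpace β] [mγ : MeasurableSpace γ]
    {μ : Measure Ω} [IsFiniteMeasure μ] {f : Ω → β} {g : Ω → γ}
    (hf : Measurable f) (hg : Measurable g) (c : γ) (hgc : g =ᵐ[μ] fun _ => c) :
    CondIndepFun m' hm' f g μ := by
  rw [condIndepFun_iff m' hm' f g hf hg μ]
  rintro t1 t2 ⟨s, hs, rfl⟩ ⟨t, ht, rfl⟩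
  set k : ℝ := if c ∈ t then 1 else 0 with hk
  have h2 : (g ⁻¹' t).indicator (fun _ => (1:ℝ)) =ᵐ[μ] fun _ => k := by
    filter_upwards [hgc] with ω hω
    by_cases hmem : c ∈ t
    · rw [Set.indicator_of_mem (by simp [Set.mem_preimage, hω, hmem]), hk, if_pos hmem]
    · rw [Set.indicator_of_notMem (by simp [Set.mem_preimage, hω, hmem]), hk, if_neg hmem]
  have h12 : (f ⁻¹' s ∩ g ⁻¹' t).indicator (fun _ => (1:ℝ))
      =ᵐ[μ] k • (f ⁻¹' s).indicator (fun _ => (1:ℝ)) := by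
    filter_upwards [hgc] with ω hω
    by_cases hmem : c ∈ t
    · by_cases hωs : ω ∈ f ⁻¹' s
      · rw [Set.indicator_of_mem (by simp [hωs, Set.mem_preimage, hω, hmem])]
        simp [hωs, hk, hmem]
      · rw [Set.indicator_of_notMem (by simp [Set.mem_inter_iff, hωs])]
        simp [hωs, hk, hmem]
    · rw [Set.indicator_of_notMem (by simp [Set.mem_inter_iff, Set.mem_preimage, hω, hmem])]
      simp [hk, hmem]
  have e1 : (μ⟦f ⁻¹' s ∩ g ⁻¹' t | m'⟧) =ᵐ[μ] k • (μ⟦f ⁻¹' s | m'⟧) :=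
    (condExp_congr_ae h12).trans (condExp_smul k _ m')
  have e2 : (μ⟦g ⁻¹' t | m'⟧) =ᵐ[μ] fun _ => k :=
    (condExp_congr_ae h2).trans (by rw [condExp_const hm' k])
  filter_upwards [e1, e2] with ω h1 h2'
  rw [h1, Pi.mul_apply, h2']
  simp [mul_comm]

/-- **Critical distortion `D_max` for the nonanticipative RDF** (Lemma 5, finite-alphabet
form): with `D_max := min_{y} (1/(n+1)) ∫ d(x, y) dP(x)`, the nonanticipative RDF
`R^{na}_{0,n}(D)` vanishes for every `D ≥ D_max` and is strictly positive for every
`0 ≤ D < D_max`. -/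
theorem nonanticipativeRDF_Dmax
    {n : ℕ} (𝒳 𝒴 : Fin (n + 1) → Type*)
    [∀ j, Fintype (𝒳 j)] [∀ j, Nonempty (𝒳 j)]
    [∀ j, MeasurableSpace (𝒳 j)] [∀ j, DiscreteMeasurableSpace (𝒳 j)]
    [∀ j, Fintype (𝒴 j)] [∀ j, Nonempty (𝒴 j)]
    [∀ j, MeasurableSpace (𝒴 j)] [∀ j, DiscreteMeasurableSpace (𝒴 j)]
    (Psrc : Measure ((j : Fin (n + 1)) → 𝒳 j)) [IsProbabilityMeasure Psrc]
    (d : (((j : Fin (n + 1)) → 𝒳 j) × ((j : Fin (n + 1)) → 𝒴 j)) → ℝ)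
    (hd : ∀ z, 0 ≤ d z)
    (R : ℝ → ℝ≥0∞)
    (hR : R = fun D =>
      ⨅ μ ∈ {μ : ProbabilityMeasure
          (((j : Fin (n + 1)) → 𝒳 j) × ((j : Fin (n + 1)) → 𝒴 j)) |
          μ.toMeasure.map Prod.fst = Psrc ∧
          (∫ z, d z ∂μ.toMeasure) ≤ (n + 1) * D ∧
          ∀ i : ℕ, ∀ hi : i < n,
            CondIndepFun
              (MeasurableSpace.comap
                (fun ω : ((j : Fin (n + 1)) → 𝒳 j) × ((j : Fin (n + 1)) → 𝒴 j) =>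
                  fun j : Fin (i + 1) => ω.1 (Fin.castLE (by omega) j)) inferInstance)
              ((measurable_pi_lambda _ fun j : Fin (i + 1) =>
                  (measurable_pi_apply _).comp measurable_fst).comap_le)
              (fun ω => fun j : Fin (n - i) => ω.1 ⟨i + 1 + j.1, by have := j.isLt; omega⟩)
              (fun ω => fun j : Fin (i + 1) => ω.2 (Fin.castLE (by omega) j))
              μ.toMeasure},
        mutualInfoProd μ.toMeasure)
    (Dmax : ℝ)
    (hDmax : Dmax = ⨅ y : (j : Fin (n + 1)) → 𝒴 j,
      (1 / (n + 1) : ℝ) * ∫ x, d (x, y) ∂Psrc) :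
    (∀ D : ℝ, Dmax ≤ D → R D = 0) ∧
    (∀ D : ℝ, 0 ≤ D → D < Dmax → 0 < R D) := by
  obtain ⟨ystar, hystar⟩ := Finite.exists_min (fun y : (j : Fin (n + 1)) → 𝒴 j =>
    (1 / (n + 1) : ℝ) * ∫ x, d (x, y) ∂Psrc)
  have hDmax_eq : (1 / (n + 1) : ℝ) * ∫ x, d (x, ystar) ∂Psrc = Dmax := by
    rw [hDmax]
    exact le_antisymm (le_ciInf hystar) (ciInf_le (Finite.bddBelow_range _) ystar)
  have hn1 : (0:ℝ) < (n : ℝ) + 1 := by positivity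
  have hint_star : ∫ x, d (x, ystar) ∂Psrc = ((n:ℝ) + 1) * Dmax := by
    field_simp at hDmax_eq
    linarith
  have hpt : ∀ y, ((n:ℝ) + 1) * Dmax ≤ ∫ x, d (x, y) ∂Psrc := by
    intro y
    have h := ciInf_le (Finite.bddBelow_range
      (fun y : (j : Fin (n + 1)) → 𝒴 j => (1 / (n + 1) : ℝ) * ∫ x, d (x, y) ∂Psrc)) y
    rw [← hDmax] at h
    rw [div_mul_eq_mul_div, one_mul, le_div_iff₀ hn1] at h
    linarith
  constructor
  · -- Part 1 : R D = 0 for D ≥ Dmax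
    intro D hD
    set μ0 : Measure ((((j : Fin (n + 1)) → 𝒳 j) × ((j : Fin (n + 1)) → 𝒴 j))) :=
      Psrc.prod (Measure.dirac ystar) with hμ0
    haveI : IsProbabilityMeasure μ0 := by rw [hμ0]; infer_instance
    have hfst : μ0.map Prod.fst = Psrc := by
      rw [hμ0, Measure.map_fst_prod]
      simp
    have hsnd : μ0.map Prod.snd = Measure.dirac ystar := by
      rw [hμ0, Measure.map_snd_prod]
      simp
    have hE0 : ∫ z, d z ∂μ0 = ((n:ℝ) + 1) * Dmax := by
      rw [hμ0, integral_prod _ Integrable.of_finite]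
      simp only [integral_dirac]
      exact hint_star
    have hae2 : ∀ᵐ ω : (((j : Fin (n + 1)) → 𝒳 j) × ((j : Fin (n + 1)) → 𝒴 j)) ∂μ0,
        ω.2 = ystar := by
      rw [ae_iff]
      have hset : {ω : (((j : Fin (n + 1)) → 𝒳 j) × ((j : Fin (n + 1)) → 𝒴 j)) |
          ¬ ω.2 = ystar} = Set.univ ×ˢ ({ystar}ᶜ) := by
        ext ω
        simp
      rw [hset, hμ0, Measure.prod_prod]
      simp
    set P0 : ProbabilityMeasure
        ((((j : Fin (n + 1)) → 𝒳 j) × ((j : Fin (n + 1)) → 𝒴 j))) := ⟨μ0, inferInstance⟩ with hP0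
    have hP0m : P0.toMeasure = μ0 := rfl
    have hmem : P0 ∈
        {μ : ProbabilityMeasure
          (((j : Fin (n + 1)) → 𝒳 j) × ((j : Fin (n + 1)) → 𝒴 j)) |
          μ.toMeasure.map Prod.fst = Psrc ∧
          (∫ z, d z ∂μ.toMeasure) ≤ (n + 1) * D ∧
          ∀ i : ℕ, ∀ hi : i < n,
            CondIndepFun
              (MeasurableSpace.comap
                (fun ω : ((j : Fin (n + 1)) → 𝒳 j) × ((j : Fin (n + 1)) → 𝒴 j) =>
                  fun j : Fin (i + 1) => ω.1 (Fin.castLE (by omega) j)) inferInstance)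
              ((measurable_pi_lambda _ fun j : Fin (i + 1) =>
                  (measurable_pi_apply _).comp measurable_fst).comap_le)
              (fun ω => fun j : Fin (n - i) => ω.1 ⟨i + 1 + j.1, by have := j.isLt; omega⟩)
              (fun ω => fun j : Fin (i + 1) => ω.2 (Fin.castLE (by omega) j))
              μ.toMeasure} := by
      refine ⟨hfst, ?_, ?_⟩
      · rw [hP0m, hE0]
        exact mul_le_mul_of_nonneg_left hD (le_of_lt hn1)
      · intro i hi
        refine aux_condIndepFun_of_ae_const _ Measurable.of_discrete Measurable.of_discrete
          (fun j : Fin (i + 1) => ystar (Fin.castLE (by omega) j)) ?_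
        filter_upwards [hae2] with ω hω
        rw [hω]
    have hMI : mutualInfoProd μ0 = 0 := by
      rw [mutualInfoProd, hfst, hsnd, ← hμ0]
      exact aux_klDivergence_self μ0
    rw [hR]
    refine le_antisymm ?_ zero_le
    refine le_trans (iInf₂_le _ hmem) ?_
    rw [hP0m, hMI]
  · -- Part 2 : R D > 0 for 0 ≤ D < Dmax
    intro D hD0 hDlt
    set M : ℝ := Finset.univ.sup' Finset.univ_nonempty d with hM
    have hdM : ∀ z, d z ≤ M := fun z => Finset.le_sup' d (Finset.mem_univ z)
    have hMDmax : ((n:ℝ) + 1) * Dmax ≤ M := by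
      have h1 : ∫ x, d (x, ystar) ∂Psrc ≤ ∫ _x, M ∂Psrc :=
        integral_mono Integrable.of_finite (integrable_const M) (fun x => hdM _)
      rw [integral_const, probReal_univ, one_smul] at h1
      linarith [hint_star]
    have hDmaxpos : 0 < Dmax := lt_of_le_of_lt hD0 hDlt
    have hMpos : 0 < M := lt_of_lt_of_le (by positivity) hMDmax
    set a : ℝ := ((n:ℝ) + 1) * (Dmax - D) with ha
    have hapos : 0 < a := by
      rw [ha]
      have : 0 < Dmax - D := by linarith
      positivity
    set c : ℝ := (a / M)^2 / 4 with hc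
    have hcpos : 0 < c := by rw [hc]; positivity
    rw [hR]
    refine lt_of_lt_of_le (ENNReal.ofReal_pos.mpr hcpos) ?_
    refine le_iInf fun μ => le_iInf fun hμ => ?_
    obtain ⟨hfst, hdist, -⟩ := hμ
    set κ := μ.toMeasure with hκ
    set β := κ.map Prod.snd with hβ
    haveI : IsProbabilityMeasure β := Measure.isProbabilityMeasure_map measurable_snd.aemeasurable
    set ν := Psrc.prod β with hν
    have hνeq : (κ.map Prod.fst).prod (κ.map Prod.snd) = ν := by rw [hfst, hν, hβ]
    haveI : IsProbabilityMeasure ν := by rw [hν]; infer_instance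
    have hEν : ((n:ℝ) + 1) * Dmax ≤ ∫ z, d z ∂ν := by
      rw [hν, integral_prod_symm _ Integrable.of_finite]
      calc ((n:ℝ) + 1) * Dmax = ∫ _y, ((n:ℝ) + 1) * Dmax ∂β := by
            rw [integral_const, probReal_univ, one_smul]
      _ ≤ ∫ y, ∫ x, d (x, y) ∂Psrc ∂β :=
            integral_mono (integrable_const _) Integrable.of_finite (fun y => hpt y)
    set p : (((j : Fin (n + 1)) → 𝒳 j) × ((j : Fin (n + 1)) → 𝒴 j)) → ℝ :=
      fun z => (κ {z}).toReal with hp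
    set q : (((j : Fin (n + 1)) → 𝒳 j) × ((j : Fin (n + 1)) → 𝒴 j)) → ℝ :=
      fun z => (ν {z}).toReal with hq
    have hEκ : ∫ z, d z ∂κ = ∑ z, p z * d z := by
      rw [integral_fintype Integrable.of_finite]
      simp [hp, smul_eq_mul, measureReal_def]
    have hEν' : ∫ z, d z ∂ν = ∑ z, q z * d z := by
      rw [integral_fintype Integrable.of_finite]
      simp [hq, smul_eq_mul, measureReal_def]
    have hL1 : a ≤ M * ∑ z, |p z - q z| := by
      have hdiff : a ≤ (∑ z, q z * d z) - (∑ z, p z * d z) := by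
        rw [hEκ] at hdist
        rw [hEν'] at hEν
        rw [ha]
        nlinarith
      have hbound : (∑ z, q z * d z) - (∑ z, p z * d z) ≤ M * ∑ z, |p z - q z| := by
        rw [← Finset.sum_sub_distrib, Finset.mul_sum]
        refine Finset.sum_le_sum fun z _ => ?_
        calc q z * d z - p z * d z = (q z - p z) * d z := by ring
        _ ≤ |(q z - p z) * d z| := le_abs_self _
        _ = |q z - p z| * |d z| := abs_mul _ _
        _ ≤ |q z - p z| * M := by
              refine mul_le_mul_of_nonneg_left ?_ (abs_nonneg _)
              rw [abs_of_nonneg (hd z)]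
              exact hdM z
        _ = M * |p z - q z| := by rw [abs_sub_comm, mul_comm]
      linarith
    have hc_le : c ≤ (∑ z, |p z - q z|)^2 / 4 := by
      have hL1' : a / M ≤ ∑ z, |p z - q z| := by
        rw [div_le_iff₀ hMpos]
        linarith [mul_comm M (∑ z, |p z - q z|)]
      have h0 : 0 ≤ a / M := le_of_lt (div_pos hapos hMpos)
      have hsq := pow_le_pow_left₀ h0 hL1' 2
      rw [hc]
      linarith
    calc ENNReal.ofReal c ≤ ENNReal.ofReal ((∑ z, |p z - q z|)^2 / 4) :=
          ENNReal.ofReal_le_ofReal hc_le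
    _ ≤ klDivergence κ ν := aux_kl_ge κ ν
    _ = mutualInfoProd κ := by rw [mutualInfoProd, hνeq]
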